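/- Let n > 4. The number of subgroups of the quasidihedral group QD_{2^n} of order 2^m equals: 1 if m = 0 or m = n; 2^{n-2} + 1 if m = 1; and 2^{n-m} + 1 if 2 ≤ m ≤ n-1. -/

import Mathlib

open SemidirectProduct Subgroup

namespace QDaux


/-- torsion subgroup of order `2^min k (n-1)` -/
def T (n k : ℕ) : Subgroup (Multiplicative (ZMod (2 ^ (n - 1)))) :=
  (powMonoidHom (2 ^ k) : _ →* _).ker

lemma mem_T {n k : ℕ} {x : Multiplicative (ZMod (2 ^ (n - 1)))} :
    x ∈ T n k ↔ x ^ (2 ^ k) = 1 := Iff.rfl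

instance instNZ (n : ℕ) : NeZero (2 ^ (n - 1)) := ⟨(Nat.two_pow_pos _).ne'⟩

lemma cardA (n : ℕ) : Nat.card (Multiplicative (ZMod (2 ^ (n - 1)))) = 2 ^ (n - 1) := by
  simp [Nat.card_eq_fintype_card, Fintype.card_multiplicative, ZMod.card]

lemma pow_A {n : ℕ} (x : Multiplicative (ZMod (2 ^ (n - 1)))) : x ^ (2 ^ (n-1)) = 1 := by
  have := pow_card_eq_one' (x := x)
  rwa [cardA] at this

lemma pow_A_dvd {n k : ℕ} (h : n - 1 ≤ k) (x : Multiplicative (ZMod (2 ^ (n - 1)))) :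
    x ^ (2 ^ k) = 1 := by
  calc x ^ (2^k) = (x ^ (2^(n-1))) ^ (2^(k - (n-1))) := by
        rw [← pow_mul, ← pow_add, show n - 1 + (k - (n-1)) = k by omega]
    _ = 1 := by rw [pow_A, one_pow]

lemma T_top {n k : ℕ} (h : n - 1 ≤ k) : T n k = ⊤ := by
  ext x; simpa [mem_T] using pow_A_dvd h x

lemma card_T_le {n k : ℕ} : Nat.card (T n k) ≤ 2 ^ k := by
  classical
  have h := IsCyclic.card_pow_eq_one_le
    (α := Multiplicative (ZMod (2 ^ (n - 1)))) (n := 2 ^ k) (Nat.two_pow_pos k)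
  rw [Nat.card_eq_fintype_card]
  refine le_trans (le_of_eq ?_) h
  rw [Fintype.card_subtype]
  congr 1
  ext x
  simp [mem_T]

lemma T_mono {n k l : ℕ} (h : k ≤ l) : T n k ≤ T n l := by
  intro x hx
  rw [mem_T] at hx ⊢
  calc x ^ (2^l) = (x ^ (2^k)) ^ (2^(l-k)) := by
        rw [← pow_mul, ← pow_add, show k + (l - k) = l by omega]
  _ = 1 := by rw [hx, one_pow]

lemma range_pow {n k : ℕ} (h : k ≤ n - 1) :
    (powMonoidHom (2 ^ k) : Multiplicative (ZMod (2 ^ (n - 1))) →* _).range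
      = T n (n - 1 - k) := by
  ext x
  simp only [MonoidHom.mem_range, powMonoidHom_apply, mem_T]
  constructor
  · rintro ⟨y, rfl⟩
    rw [← pow_mul, ← pow_add, show k + (n - 1 - k) = n - 1 by omega]
    exact pow_A y
  · intro hx
    have hdvd : (2 : ℕ) ^ k ∣ (x.toAdd).val := by
      have h1 : ((2 ^ (n - 1 - k) * (x.toAdd).val : ℕ) : ZMod (2 ^ (n-1))) = 0 := by
        have h0 := congrArg Multiplicative.toAdd hx
        rw [toAdd_pow, toAdd_one, nsmul_eq_mul] at h0
        push_cast
        rw [ZMod.natCast_val, ZMod.cast_id]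
        exact_mod_cast h0
      rw [ZMod.natCast_eq_zero_iff] at h1
      have h3 : (2:ℕ) ^ (n-1) = 2 ^ (n-1-k) * 2 ^ k := by
        rw [← pow_add, show n - 1 - k + k = n - 1 by omega]
      have h1' : (2:ℕ)^(n-1-k) * 2^k ∣ 2 ^ (n-1-k) * (x.toAdd).val := by
        rw [← h3]; exact h1
      exact (mul_dvd_mul_iff_left (a := (2:ℕ)^(n-1-k)) (by positivity)).mp h1'
    obtain ⟨c, hc⟩ := hdvd
    refine ⟨Multiplicative.ofAdd ((c : ℕ) : ZMod (2 ^ (n-1))), ?_⟩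
    apply Multiplicative.toAdd.injective
    rw [toAdd_pow, toAdd_ofAdd, nsmul_eq_mul]
    have : ((2^k * c : ℕ) : ZMod (2^(n-1))) = Multiplicative.toAdd x := by
      rw [← hc]
      exact ZMod.natCast_rightInverse _
    push_cast at this
    rw [← this]
    push_cast
    ring

lemma card_T {n k : ℕ} (h : k ≤ n - 1) : Nat.card (T n k) = 2 ^ k := by
  refine le_antisymm card_T_le ?_
  have h' : n - 1 - k ≤ n - 1 := by omega
  have hrange := range_pow (n := n) h'
  have hker : (powMonoidHom (2 ^ (n-1-k)) : Multiplicative (ZMod (2 ^ (n - 1))) →* _).ker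
      = T n (n-1-k) := rfl
  have hiso := Nat.card_congr
    (QuotientGroup.quotientKerEquivRange
      (powMonoidHom (2 ^ (n-1-k)) : Multiplicative (ZMod (2 ^ (n - 1))) →* _)).toEquiv
  have hlag := Subgroup.card_eq_card_quotient_mul_card_subgroup
    ((powMonoidHom (2 ^ (n-1-k)) : Multiplicative (ZMod (2 ^ (n - 1))) →* _).ker)
  rw [cardA, hiso, hrange, hker, show n - 1 - (n - 1 - k) = k by omega] at hlag
  have hle2 : Nat.card (T n (n-1-k)) ≤ 2 ^ (n-1-k) := card_T_le
  have hmul : 2 ^ k * 2 ^ (n-1-k) = 2 ^ (n-1) := by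
    rw [← pow_add, show k + (n-1-k) = n - 1 by omega]
  have : 2 ^ k * 2 ^ (n-1-k) ≤ Nat.card (T n k) * 2 ^ (n-1-k) :=
    calc 2 ^ k * 2 ^ (n-1-k) = 2 ^ (n-1) := hmul
    _ = Nat.card (T n k) * Nat.card (T n (n-1-k)) := hlag
    _ ≤ Nat.card (T n k) * 2 ^ (n-1-k) := Nat.mul_le_mul_left _ hle2
  exact Nat.le_of_mul_le_mul_right this (by positivity)

lemma subgroup_eq_T {n k : ℕ} (h : k ≤ n - 1) (K : Subgroup (Multiplicative (ZMod (2 ^ (n - 1)))))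
    (hK : Nat.card K = 2 ^ k) : K = T n k := by
  have hle : K ≤ T n k := by
    intro x hx
    rw [mem_T]
    have : (⟨x, hx⟩ : K) ^ (2^k) = 1 := by
      rw [← hK]; exact pow_card_eq_one'
    simpa [← Subgroup.coe_pow] using congrArg (Subtype.val) this
  exact Subgroup.eq_of_le_of_card_ge hle (by rw [hK, card_T h])

section Arith
variable {n : ℕ} (hn : 4 < n)


include hn in
lemma r_mul_r : (2^(n-2)-1) * (2^(n-2)-1) = 2^(n-1) * (2^(n-3)-1) + 1 := by
  obtain ⟨s, hs⟩ : ∃ s, 2^(n-3) = s + 1 := ⟨2^(n-3) - 1, by have := Nat.two_pow_pos (n-3); omega⟩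
  have h2 : (2:ℕ)^(n-2) = 2 * 2^(n-3) := by
    rw [← pow_succ']; congr 1; omega
  have h1 : (2:ℕ)^(n-1) = 4 * 2^(n-3) := by
    rw [show (4:ℕ) = 2^2 by norm_num, ← pow_add]; congr 1; omega
  rw [h1, h2, hs]
  rw [show 2*(s+1)-1 = 2*s+1 by omega, show s+1-1 = s by omega]
  ring

include hn in
lemma rr_pow (x : Multiplicative (ZMod (2 ^ (n-1)))) :
    (x ^ (2^(n-2)-1)) ^ (2^(n-2)-1) = x := by
  rw [← pow_mul, r_mul_r hn, pow_add, pow_mul, pow_A, one_pow, pow_one, one_mul]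

lemma r_pow (x : Multiplicative (ZMod (2 ^ (n-1)))) :
    x * x ^ (2^(n-2)-1) = x ^ (2^(n-2)) := by
  nth_rewrite 1 [show x = x ^ 1 from (pow_one x).symm]
  rw [← pow_add]
  congr 1
  have := Nat.two_pow_pos (n-2)
  omega

end Arith


instance instFiniteSDP {N G : Type*} [Group N] [Group G] [Finite N] [Finite G]
    (φ : G →* MulAut N) : Finite (N ⋊[φ] G) :=
  Finite.of_injective (fun g => (g.left, g.right))
    (fun a b h => by ext <;> simp_all)

-- B = Multiplicative (ZMod 2) facts
notation "g₀" => Multiplicative.ofAdd (1 : ZMod 2)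

lemma B_cases (b : Multiplicative (ZMod 2)) : b = 1 ∨ b = g₀ := by
  have : ∀ v : ZMod 2, v = 0 ∨ v = 1 := by decide
  rcases this b.toAdd with h | h
  · left; apply Multiplicative.toAdd.injective; simpa using h
  · right; apply Multiplicative.toAdd.injective; simpa using h

lemma g0_mul_g0 : g₀ * g₀ = (1 : Multiplicative (ZMod 2)) := by decide
lemma g0_ne_one : g₀ ≠ (1 : Multiplicative (ZMod 2)) := by decide
lemma g0_inv : g₀⁻¹ = g₀ := by decide

section Psi

variable {n : ℕ} {φ : Multiplicative (ZMod 2) →* MulAut (Multiplicative (ZMod (2 ^ (n - 1))))}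
  (hφ : ∀ x : Multiplicative (ZMod (2 ^ (n - 1))),
      φ (Multiplicative.ofAdd 1) x = x ^ (2 ^ (n - 2) - 1))

lemma key {k : ℕ} {x : Multiplicative (ZMod (2 ^ (n-1)))} (hx : x ∈ T n (n-2+k)) :
    x * x ^ (2^(n-2)-1) ∈ T n k := by
  rw [r_pow, mem_T, ← pow_mul, ← pow_add]
  exact hx

omit hφ in
include hφ in
lemma phi_one (y : Multiplicative (ZMod (2 ^ (n-1)))) : φ 1 y = y := by
  rw [map_one]; rfl

/-- The subgroup `T n k ∪ (x·T n k)·g₀` of the semidirect product. -/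
def psi (k : ℕ) (x : Multiplicative (ZMod (2 ^ (n-1)))) (hx : x ∈ T n (n-2+k)) :
    Subgroup (Multiplicative (ZMod (2 ^ (n - 1))) ⋊[φ] Multiplicative (ZMod 2)) where
  carrier := {g | (g.right = 1 ∧ g.left ∈ T n k) ∨ (g.right = g₀ ∧ x⁻¹ * g.left ∈ T n k)}
  one_mem' := Or.inl ⟨rfl, one_mem _⟩
  mul_mem' := by
    rintro a b (⟨ha1, ha2⟩ | ⟨ha1, ha2⟩) (⟨hb1, hb2⟩ | ⟨hb1, hb2⟩) <;>
      simp only [Set.mem_setOf_eq, mul_right, mul_left, ha1, hb1, one_mul, mul_one]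
    · exact Or.inl ⟨trivial, by rw [phi_one hφ]; exact mul_mem ha2 hb2⟩
    · refine Or.inr ⟨trivial, ?_⟩
      rw [phi_one hφ]
      have : x⁻¹ * (a.left * b.left) = a.left * (x⁻¹ * b.left) := by
        rw [mul_comm a.left b.left, ← mul_assoc]
        rw [mul_comm (x⁻¹) b.left, mul_assoc, mul_comm a.left, ← mul_assoc]
      rw [this]
      exact mul_mem ha2 hb2
    · refine Or.inr ⟨trivial, ?_⟩
      rw [hφ]
      rw [← mul_assoc]
      exact mul_mem ha2 (pow_mem hb2 _)
    · refine Or.inl ⟨g0_mul_g0, ?_⟩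
      rw [hφ]
      have e1 : a.left = x * (x⁻¹ * a.left) := by group
      have e2 : b.left = x * (x⁻¹ * b.left) := by group
      have e3 : a.left * b.left ^ (2^(n-2)-1)
          = (x * x ^ (2^(n-2)-1)) * ((x⁻¹ * a.left) * ((x⁻¹ * b.left) ^ (2^(n-2)-1))) := by
        calc a.left * b.left ^ (2^(n-2)-1)
            = (x * (x⁻¹ * a.left)) * ((x * (x⁻¹ * b.left)) ^ (2^(n-2)-1)) := by
              rw [← e1, ← e2]
          _ = (x * (x⁻¹ * a.left)) * ((x ^ (2^(n-2)-1)) * ((x⁻¹ * b.left) ^ (2^(n-2)-1))) := by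
              rw [mul_pow]
          _ = (x * x ^ (2^(n-2)-1)) * ((x⁻¹ * a.left) * ((x⁻¹ * b.left) ^ (2^(n-2)-1))) := by
              rw [mul_mul_mul_comm]
      rw [e3]
      exact mul_mem (key hx) (mul_mem ha2 (pow_mem hb2 _))
  inv_mem' := by
    rintro a (⟨ha1, ha2⟩ | ⟨ha1, ha2⟩)
    · refine Or.inl ⟨by simp [ha1], ?_⟩
      simp only [inv_left, ha1, inv_one, map_one, MulAut.one_apply]
      exact inv_mem ha2
    · refine Or.inr ⟨by simp [ha1, g0_inv], ?_⟩
      simp only [inv_left, ha1, g0_inv]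
      rw [hφ]
      have e1 : a.left = x * (x⁻¹ * a.left) := by group
      have e3 : x⁻¹ * (a.left⁻¹) ^ (2^(n-2)-1)
          = (x⁻¹ * (x⁻¹) ^ (2^(n-2)-1)) * (((x⁻¹ * a.left)⁻¹) ^ (2^(n-2)-1)) := by
        calc x⁻¹ * (a.left⁻¹) ^ (2^(n-2)-1)
            = x⁻¹ * ((x * (x⁻¹ * a.left))⁻¹) ^ (2^(n-2)-1) := by rw [← e1]
          _ = x⁻¹ * ((x⁻¹ * (x⁻¹ * a.left)⁻¹)) ^ (2^(n-2)-1) := by rw [mul_inv]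
          _ = x⁻¹ * ((x⁻¹) ^ (2^(n-2)-1) * ((x⁻¹ * a.left)⁻¹) ^ (2^(n-2)-1)) := by rw [mul_pow]
          _ = (x⁻¹ * (x⁻¹) ^ (2^(n-2)-1)) * (((x⁻¹ * a.left)⁻¹) ^ (2^(n-2)-1)) := by
              rw [← mul_assoc]
      rw [e3]
      exact mul_mem (key (inv_mem hx)) (pow_mem (inv_mem ha2) _)

lemma mem_psi {k : ℕ} {x : Multiplicative (ZMod (2 ^ (n-1)))} {hx : x ∈ T n (n-2+k)}
    {g : Multiplicative (ZMod (2 ^ (n - 1))) ⋊[φ] Multiplicative (ZMod 2)} :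
    g ∈ psi hφ k x hx ↔
      (g.right = 1 ∧ g.left ∈ T n k) ∨ (g.right = g₀ ∧ x⁻¹ * g.left ∈ T n k) := Iff.rfl

end Psi

section Psi2
variable {n : ℕ} {φ : Multiplicative (ZMod 2) →* MulAut (Multiplicative (ZMod (2 ^ (n - 1))))}
  (hφ : ∀ x : Multiplicative (ZMod (2 ^ (n - 1))),
      φ (Multiplicative.ofAdd 1) x = x ^ (2 ^ (n - 2) - 1))
  {k : ℕ} {x x' : Multiplicative (ZMod (2 ^ (n-1)))}
  {hx : x ∈ T n (n-2+k)} {hx' : x' ∈ T n (n-2+k)}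

lemma g0_ne_one' : g₀ ≠ (1 : Multiplicative (ZMod 2)) := by decide

lemma card_psi : Nat.card (psi hφ k x hx) = 2 * Nat.card (T n k) := by
  have hf : ∀ (t : T n k) (b : Bool),
      (cond b ⟨x * t.1, g₀⟩ ⟨t.1, 1⟩ :
        Multiplicative (ZMod (2 ^ (n - 1))) ⋊[φ] Multiplicative (ZMod 2)) ∈ psi hφ k x hx := by
    intro t b
    cases b
    · exact Or.inl ⟨rfl, t.2⟩
    · exact Or.inr ⟨rfl, by simpa using t.2⟩
  let f : T n k × Bool → psi hφ k x hx := fun p => ⟨_, hf p.1 p.2⟩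
  have hbij : Function.Bijective f := by
    constructor
    · rintro ⟨⟨t, ht⟩, b⟩ ⟨⟨t', ht'⟩, b'⟩ h
      have h' := congrArg (fun z => z.1.right) h
      have h'' := congrArg (fun z => z.1.left) h
      cases b <;> cases b'
      · simp only [f, Bool.cond_false] at h''
        simp only [Prod.mk.injEq, Subtype.mk.injEq]
        exact ⟨h'', trivial⟩
      · have e : (1 : Multiplicative (ZMod 2)) = g₀ := h'
        exact absurd e (fun e => g0_ne_one' e.symm)
      · have e : g₀ = (1 : Multiplicative (ZMod 2)) := h'
        exact absurd e g0_ne_one'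
      · simp only [f, Bool.cond_true] at h''
        simp only [Prod.mk.injEq, Subtype.mk.injEq]
        exact ⟨mul_left_cancel h'', trivial⟩
    · rintro ⟨g, hg⟩
      rcases hg with ⟨h1, h2⟩ | ⟨h1, h2⟩
      · refine ⟨(⟨g.left, h2⟩, false), ?_⟩
        apply Subtype.ext
        show (⟨g.left, 1⟩ : _ ⋊[φ] _) = g
        ext <;> simp [h1.symm]
      · refine ⟨(⟨x⁻¹ * g.left, h2⟩, true), ?_⟩
        apply Subtype.ext
        show (⟨x * (x⁻¹ * g.left), g₀⟩ : _ ⋊[φ] _) = g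
        ext <;> simp [h1.symm]
  have := Nat.card_eq_of_bijective f hbij
  rw [← this, Nat.card_prod]
  have : Nat.card Bool = 2 := by simp [Nat.card_eq_fintype_card]
  rw [this, mul_comm]

lemma psi_not_le :
    ¬ psi hφ k x hx ≤ (rightHom :
      Multiplicative (ZMod (2 ^ (n - 1))) ⋊[φ] Multiplicative (ZMod 2) →* _).ker := by
  intro hle
  have hmem : (⟨x, g₀⟩ : _ ⋊[φ] _) ∈ psi hφ k x hx := Or.inr ⟨rfl, by simpa using one_mem _⟩
  have := hle hmem
  rw [MonoidHom.mem_ker] at this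
  exact g0_ne_one' this

lemma psi_inj (h : psi hφ k x hx = psi hφ k x' hx') : x⁻¹ * x' ∈ T n k := by
  have hmem : (⟨x', g₀⟩ : _ ⋊[φ] _) ∈ psi hφ k x' hx' := Or.inr ⟨rfl, by simpa using one_mem _⟩
  rw [← h] at hmem
  rcases hmem with ⟨h1, _⟩ | ⟨_, h2⟩
  · exact absurd h1 g0_ne_one'
  · exact h2

lemma psi_congr (h : x⁻¹ * x' ∈ T n k) : psi hφ k x hx = psi hφ k x' hx' := by
  ext g
  rw [mem_psi, mem_psi]
  have key : ∀ y, x⁻¹ * y ∈ T n k ↔ x'⁻¹ * y ∈ T n k := by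
    intro y
    constructor
    · intro hy
      have e : x'⁻¹ * y = (x⁻¹ * x')⁻¹ * (x⁻¹ * y) := by group
      rw [e]; exact mul_mem (inv_mem h) hy
    · intro hy
      have e : x⁻¹ * y = (x⁻¹ * x') * (x'⁻¹ * y) := by group
      rw [e]; exact mul_mem h hy
  rw [key g.left]

lemma psi_surj (hn : 4 < n) {m : ℕ} (hm1 : 1 ≤ m) (hmn : m ≤ n)
    (H : Subgroup (Multiplicative (ZMod (2 ^ (n - 1))) ⋊[φ] Multiplicative (ZMod 2)))
    (hcard : Nat.card H = 2 ^ m)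
    (hnle : ¬ H ≤ (rightHom (φ := φ)).ker) :
    ∃ (x : Multiplicative (ZMod (2 ^ (n-1)))) (hx : x ∈ T n (n-2+(m-1))),
      H = psi hφ (m-1) x hx := by
  classical
  -- get an element with nontrivial right component
  rw [SetLike.le_def] at hnle
  push_neg at hnle
  obtain ⟨h, hH, hker⟩ := hnle
  rw [MonoidHom.mem_ker] at hker
  have hright : h.right = g₀ := by
    rcases B_cases h.right with h1 | h1
    · exact absurd h1 hker
    · exact h1
  -- the restriction of rightHom to H is surjective
  set f : H →* Multiplicative (ZMod 2) := (rightHom (φ := φ)).domRestrict H with hf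
  have hrange : f.range = ⊤ := by
    rw [Subgroup.eq_top_iff']
    intro b
    rcases B_cases b with h1 | h1
    · rw [h1]; exact one_mem _
    · exact ⟨⟨h, hH⟩, by rw [h1, hf]; exact hright⟩
  have hcardB : Nat.card (Multiplicative (ZMod 2)) = 2 := by
    simp [Nat.card_eq_fintype_card]
  -- card of ker f
  have hkercard : Nat.card f.ker = 2 ^ (m-1) := by
    have hlag := Subgroup.card_eq_card_quotient_mul_card_subgroup f.ker
    have hiso := Nat.card_congr (QuotientGroup.quotientKerEquivRange f).toEquiv
    rw [hcard, hiso, hrange, Subgroup.card_top, hcardB] at hlag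
    have : (2:ℕ) ^ m = 2 * 2 ^ (m-1) := by
      rw [← pow_succ']; congr 1; omega
    omega
  -- K := comap inl H equals T n (m-1)
  set K : Subgroup (Multiplicative (ZMod (2 ^ (n-1)))) := H.comap (inl (φ := φ)) with hK
  have eKf : K ≃ f.ker := by
    refine ⟨fun y => ⟨⟨inl y.1, y.2⟩, ?_⟩, fun z => ⟨z.1.1.left, ?_⟩, ?_, ?_⟩
    · rw [MonoidHom.mem_ker]
      exact rightHom_inl (φ := φ) y.1
    · have h1 : z.1.1.right = 1 := by
        have := z.2
        rw [MonoidHom.mem_ker] at this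
        exact this
      have h2 : inl (φ := φ) z.1.1.left = z.1.1 := by
        ext
        · rfl
        · exact h1.symm
      rw [Subgroup.mem_comap, h2]
      exact z.1.2
    · intro y; rfl
    · intro z
      apply Subtype.ext
      apply Subtype.ext
      ext
      · rfl
      · show (1 : Multiplicative (ZMod 2)) = z.1.1.right
        have := z.2
        rw [MonoidHom.mem_ker] at this
        exact this.symm
  have hKcard : Nat.card K = 2 ^ (m-1) := by rw [Nat.card_congr eKf, hkercard]
  have hKT : K = T n (m-1) := subgroup_eq_T (by omega) K hKcard
  -- the distinguished element
  set x := h.left with hxdef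
  have hmemK : x * x ^ (2^(n-2)-1) ∈ K := by
    rw [hK, Subgroup.mem_comap]
    have : inl (φ := φ) (x * x ^ (2^(n-2)-1)) = h * h := by
      ext
      · show x * x ^ (2^(n-2)-1) = h.left * φ h.right h.left
        rw [hright, hφ]
      · show (1 : Multiplicative (ZMod 2)) = h.right * h.right
        rw [hright, g0_mul_g0]
    rw [this]
    exact mul_mem hH hH
  have hx : x ∈ T n (n-2+(m-1)) := by
    rw [hKT, mem_T] at hmemK
    rw [r_pow] at hmemK
    rw [mem_T, pow_add, pow_mul]
    exact hmemK
  refine ⟨x, hx, ?_⟩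
  ext g
  rw [mem_psi]
  constructor
  · intro hg
    rcases B_cases g.right with h1 | h1
    · refine Or.inl ⟨h1, ?_⟩
      have h2 : inl (φ := φ) g.left = g := by
        ext
        · rfl
        · exact h1.symm
      rw [← hKT, hK, Subgroup.mem_comap, h2]
      exact hg
    · refine Or.inr ⟨h1, ?_⟩
      have hw : g * h⁻¹ ∈ H := mul_mem hg (inv_mem hH)
      have hwr : (g * h⁻¹).right = 1 := by
        rw [mul_right, inv_right, h1, hright, g0_inv, g0_mul_g0]
      have h2 : inl (φ := φ) ((g * h⁻¹).left) = g * h⁻¹ := by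
        ext
        · rfl
        · exact hwr.symm
      have h3 : (g * h⁻¹).left ∈ K := by
        rw [hK, Subgroup.mem_comap, h2]; exact hw
      have h4 : (g * h⁻¹).left = x⁻¹ * g.left := by
        rw [mul_left, inv_left, hright, h1, g0_inv, hφ, hφ, rr_pow hn, mul_comm, ← hxdef]
      rw [h4, hKT] at h3
      exact h3
  · rintro (⟨h1, h2⟩ | ⟨h1, h2⟩)
    · have h3 : inl (φ := φ) g.left = g := by
        ext
        · rfl
        · exact h1.symm
      rw [← h3]
      rw [← hKT, hK, Subgroup.mem_comap] at h2
      exact h2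
    · have h3 : g = inl (φ := φ) (x⁻¹ * g.left) * h := by
        ext
        · show g.left = x⁻¹ * g.left * φ 1 h.left
          rw [map_one, MulAut.one_apply, ← hxdef, mul_comm (x⁻¹) g.left, mul_assoc,
            inv_mul_cancel, mul_one]
        · show g.right = 1 * h.right
          rw [one_mul, hright, h1]
      rw [h3]
      refine mul_mem ?_ hH
      rw [← hKT, hK, Subgroup.mem_comap] at h2
      exact h2


lemma card_T_gen {n k : ℕ} (hn : 4 < n) : Nat.card (T n k) = 2 ^ (min k (n-1)) := by
  rcases le_or_gt k (n-1) with h | h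
  · rw [min_eq_left h]; exact card_T h
  · rw [min_eq_right h.le, T_top h.le, Subgroup.card_top, cardA]

include hφ in
lemma count_outside (hn : 4 < n) {m : ℕ} (hm1 : 1 ≤ m) (hmn : m ≤ n) :
    Nat.card {H : Subgroup (Multiplicative (ZMod (2 ^ (n - 1))) ⋊[φ] Multiplicative (ZMod 2)) //
        Nat.card H = 2 ^ m ∧ ¬ H ≤ (rightHom (φ := φ)).ker} * 2 ^ (m-1)
      = 2 ^ (min (n-2+(m-1)) (n-1)) := by
  classical
  set V : Subgroup (Multiplicative (ZMod (2 ^ (n-1)))) := T n (n-2+(m-1)) with hV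
  set S : Subgroup V := (T n (m-1)).subgroupOf V with hS
  have hTleV : T n (m-1) ≤ V := T_mono (by omega)
  -- the map from V to outside subgroups
  have hcardpsi : ∀ (x : Multiplicative (ZMod (2 ^ (n-1)))) (hx : x ∈ T n (n-2+(m-1))),
      Nat.card (psi hφ (m-1) x hx) = 2 ^ m := by
    intro x hx
    rw [card_psi, card_T (by omega : m - 1 ≤ n - 1), ← pow_succ']
    congr 1
    omega
  let F : V → {H : Subgroup (Multiplicative (ZMod (2 ^ (n - 1))) ⋊[φ] Multiplicative (ZMod 2)) //
      Nat.card H = 2 ^ m ∧ ¬ H ≤ (rightHom (φ := φ)).ker} :=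
    fun v => ⟨psi hφ (m-1) v.1 v.2, hcardpsi v.1 v.2, psi_not_le hφ⟩
  have hwd : ∀ a b : V, (QuotientGroup.leftRel S) a b → F a = F b := by
    intro a b hab
    rw [QuotientGroup.leftRel_apply] at hab
    rw [hS, Subgroup.mem_subgroupOf] at hab
    simp only [Subgroup.coe_mul, InvMemClass.coe_inv] at hab
    exact Subtype.ext (psi_congr hφ (hx := a.2) (hx' := b.2) hab)
  let Fbar : (V ⧸ S) → {H : Subgroup (Multiplicative (ZMod (2 ^ (n - 1))) ⋊[φ]
      Multiplicative (ZMod 2)) // Nat.card H = 2 ^ m ∧ ¬ H ≤ (rightHom (φ := φ)).ker} :=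
    Quotient.lift F hwd
  have hbij : Function.Bijective Fbar := by
    constructor
    · intro q q'
      induction q using Quotient.inductionOn with | h a =>
      induction q' using Quotient.inductionOn with | h b =>
      intro hab
      have : F a = F b := hab
      have h2 : psi hφ (m-1) a.1 a.2 = psi hφ (m-1) b.1 b.2 := congrArg Subtype.val this
      have h3 := psi_inj hφ h2
      apply Quotient.sound
      refine QuotientGroup.leftRel_apply.mpr ?_
      rw [hS, Subgroup.mem_subgroupOf]
      simp only [Subgroup.coe_mul, InvMemClass.coe_inv]
      exact h3
    · rintro ⟨H, hc, hnle⟩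
      obtain ⟨x, hx, hHx⟩ := psi_surj hφ hn hm1 hmn H hc hnle
      refine ⟨Quotient.mk _ (⟨x, hx⟩ : V), ?_⟩
      apply Subtype.ext
      show psi hφ (m-1) x hx = H
      exact hHx.symm
  have hcardeq : Nat.card {H : Subgroup (Multiplicative (ZMod (2 ^ (n - 1))) ⋊[φ]
        Multiplicative (ZMod 2)) // Nat.card H = 2 ^ m ∧ ¬ H ≤ (rightHom (φ := φ)).ker}
      = Nat.card (V ⧸ S) := (Nat.card_eq_of_bijective Fbar hbij).symm
  have hlag := Subgroup.card_eq_card_quotient_mul_card_subgroup S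
  have hcardS : Nat.card S = 2 ^ (m-1) := by
    rw [hS, Nat.card_congr (Subgroup.subgroupOfEquivOfLe hTleV).toEquiv,
      card_T (by omega : m - 1 ≤ n - 1)]
  have hcardV : Nat.card V = 2 ^ (min (n-2+(m-1)) (n-1)) := card_T_gen hn
  rw [hcardeq, ← hcardS, ← hlag, hcardV]

lemma count_outside_zero :
    Nat.card {H : Subgroup (Multiplicative (ZMod (2 ^ (n - 1))) ⋊[φ] Multiplicative (ZMod 2)) //
        Nat.card H = 2 ^ 0 ∧ ¬ H ≤ (rightHom (φ := φ)).ker} = 0 := by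
  rw [Nat.card_eq_zero]
  left
  refine ⟨?_⟩
  rintro ⟨H, hc, hnle⟩
  rw [pow_zero, Subgroup.card_eq_one] at hc
  exact hnle (hc ▸ bot_le)


lemma count_subA {n : ℕ} (hn : 4 < n) {m : ℕ} (hm : m ≤ n - 1) :
    Nat.card {K : Subgroup (Multiplicative (ZMod (2 ^ (n-1)))) // Nat.card K = 2 ^ m} = 1 := by
  rw [Nat.card_eq_one_iff_unique]
  constructor
  · refine ⟨fun K K' => ?_⟩
    apply Subtype.ext
    rw [subgroup_eq_T hm K.1 K.2, subgroup_eq_T hm K'.1 K'.2]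
  · exact ⟨⟨T n m, card_T hm⟩⟩

lemma count_subA_top {n : ℕ} (hn : 4 < n) :
    Nat.card {K : Subgroup (Multiplicative (ZMod (2 ^ (n-1)))) // Nat.card K = 2 ^ n} = 0 := by
  rw [Nat.card_eq_zero]
  left
  refine ⟨?_⟩
  rintro ⟨K, hK⟩
  have h1 : Nat.card K ∣ Nat.card (Multiplicative (ZMod (2 ^ (n-1)))) :=
    Subgroup.card_subgroup_dvd_card K
  rw [hK, cardA] at h1
  have h2 := Nat.le_of_dvd (Nat.two_pow_pos _) h1
  have h3 : (2:ℕ) ^ (n-1) < 2 ^ n := Nat.pow_lt_pow_right one_lt_two (by omega)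
  omega

lemma count_inside {m : ℕ} :
    Nat.card {H : Subgroup (Multiplicative (ZMod (2 ^ (n - 1))) ⋊[φ] Multiplicative (ZMod 2)) //
        Nat.card H = 2 ^ m ∧ H ≤ (rightHom (φ := φ)).ker}
      = Nat.card {K : Subgroup (Multiplicative (ZMod (2 ^ (n-1)))) // Nat.card K = 2 ^ m} := by
  have hrk : (inl : Multiplicative (ZMod (2 ^ (n-1))) →* _ ⋊[φ] _).range
      = (rightHom (φ := φ)).ker := range_inl_eq_ker_rightHom
  have hmc : ∀ H : Subgroup (Multiplicative (ZMod (2 ^ (n - 1))) ⋊[φ] Multiplicative (ZMod 2)),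
      H ≤ (rightHom (φ := φ)).ker → Subgroup.map inl (Subgroup.comap inl H) = H := by
    intro H hle
    rw [Subgroup.map_comap_eq, hrk, inf_eq_right.mpr hle]
  have hcard1 : ∀ H : Subgroup (Multiplicative (ZMod (2 ^ (n - 1))) ⋊[φ] Multiplicative (ZMod 2)),
      H ≤ (rightHom (φ := φ)).ker → Nat.card (Subgroup.comap (inl (φ := φ)) H) = Nat.card H := by
    intro H hle
    rw [Nat.card_congr (Subgroup.equivMapOfInjective (Subgroup.comap inl H) inl
      (inl_injective (φ := φ))).toEquiv, hmc H hle]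
  have hcard2 : ∀ K : Subgroup (Multiplicative (ZMod (2 ^ (n-1)))),
      Nat.card (Subgroup.map (inl (φ := φ)) K) = Nat.card K := by
    intro K
    rw [Nat.card_congr (Subgroup.equivMapOfInjective K inl (inl_injective (φ := φ))).toEquiv]
  refine Nat.card_congr ⟨fun H => ⟨Subgroup.comap inl H.1, by rw [hcard1 H.1 H.2.2, H.2.1]⟩,
    fun K => ⟨Subgroup.map inl K.1, by rw [hcard2 K.1, K.2], ?_⟩, ?_, ?_⟩
  · rw [← hrk, MonoidHom.range_eq_map]
    exact Subgroup.map_mono le_top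
  · rintro ⟨H, h1, h2⟩
    apply Subtype.ext
    exact hmc H h2
  · rintro ⟨K, h1⟩
    apply Subtype.ext
    exact Subgroup.comap_map_eq_self_of_injective (inl_injective (φ := φ)) K

lemma card_split {α : Type*} [Finite α] (p q : α → Prop) :
    Nat.card {a // p a} = Nat.card {a // p a ∧ q a} + Nat.card {a // p a ∧ ¬ q a} := by
  classical
  have e1 : {a // p a} ≃ {x : {a // p a} // q x.1} ⊕ {x : {a // p a} // ¬ q x.1} :=
    (Equiv.sumCompl _).symm
  rw [Nat.card_congr e1, Nat.card_sum,
    Nat.card_congr (Equiv.subtypeSubtypeEquivSubtypeInter p q),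
    Nat.card_congr (Equiv.subtypeSubtypeEquivSubtypeInter p (fun a => ¬ q a))]

end Psi2

end QDaux

open QDaux SemidirectProduct Subgroup in
/-- For `n > 4`, the number of subgroups of the quasidihedral group `QD_{2^n}` of order `2^m`
is: `1` if `m = 0` or `m = n`; `2^(n-2) + 1` if `m = 1`; `2^(n-m) + 1` if `2 ≤ m ≤ n-1`. -/
theorem quasidihedral_card_subgroups (n m : ℕ) (hn : 4 < n)
    (φ : Multiplicative (ZMod 2) →* MulAut (Multiplicative (ZMod (2 ^ (n - 1)))))
    (hφ : ∀ x : Multiplicative (ZMod (2 ^ (n - 1))),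
      φ (Multiplicative.ofAdd 1) x = x ^ (2 ^ (n - 2) - 1)) :
    ((m = 0 ∨ m = n) →
      Nat.card {H : Subgroup (Multiplicative (ZMod (2 ^ (n - 1))) ⋊[φ] Multiplicative (ZMod 2)) //
        Nat.card H = 2 ^ m} = 1) ∧
    (m = 1 →
      Nat.card {H : Subgroup (Multiplicative (ZMod (2 ^ (n - 1))) ⋊[φ] Multiplicative (ZMod 2)) //
        Nat.card H = 2 ^ m} = 2 ^ (n - 2) + 1) ∧
    (2 ≤ m → m ≤ n - 1 →
      Nat.card {H : Subgroup (Multiplicative (ZMod (2 ^ (n - 1))) ⋊[φ] Multiplicative (ZMod 2)) //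
        Nat.card H = 2 ^ m} = 2 ^ (n - m) + 1) := by
  have hsplit := card_split
    (p := fun H : Subgroup (Multiplicative (ZMod (2 ^ (n - 1))) ⋊[φ] Multiplicative (ZMod 2)) =>
      Nat.card H = 2 ^ m)
    (q := fun H => H ≤ (rightHom (φ := φ)).ker)
  rw [count_inside (φ := φ)] at hsplit
  refine ⟨?_, ?_, ?_⟩
  · rintro (rfl | hm)
    · rw [hsplit, count_subA hn (by omega), count_outside_zero (φ := φ)]
    · rw [hm] at hsplit ⊢
      rw [hsplit, count_subA_top hn]
      have ho := count_outside hφ hn (m := n) (by omega : 1 ≤ n) le_rfl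
      rw [min_eq_right (by omega)] at ho
      have : Nat.card {H : Subgroup (Multiplicative (ZMod (2 ^ (n - 1))) ⋊[φ]
          Multiplicative (ZMod 2)) // Nat.card H = 2 ^ n ∧ ¬ H ≤ (rightHom (φ := φ)).ker}
          = 1 := by
        have h2 : (1 : ℕ) * 2 ^ (n - 1) = 2 ^ (n - 1) := one_mul _
        exact Nat.eq_of_mul_eq_mul_right (Nat.two_pow_pos _) (by rw [ho, h2])
      rw [this]
  · rintro rfl
    rw [hsplit, count_subA hn (by omega)]
    have ho := count_outside hφ hn le_rfl (by omega)
    rw [min_eq_left (by omega)] at ho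
    simp only [Nat.sub_self, pow_zero, mul_one, Nat.add_zero] at ho
    rw [ho]
    omega
  · intro hm2 hmn1
    rw [hsplit, count_subA hn hmn1]
    have ho := count_outside hφ hn (m := m) (by omega) (by omega)
    rw [min_eq_right (by omega)] at ho
    have hsum : (2:ℕ) ^ (n - m) * 2 ^ (m - 1) = 2 ^ (n - 1) := by
      rw [← pow_add]; congr 1; omega
    have : Nat.card {H : Subgroup (Multiplicative (ZMod (2 ^ (n - 1))) ⋊[φ]
        Multiplicative (ZMod 2)) // Nat.card H = 2 ^ m ∧ ¬ H ≤ (rightHom (φ := φ)).ker}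
        = 2 ^ (n - m) :=
      Nat.eq_of_mul_eq_mul_right (Nat.two_pow_pos _) (by rw [ho, hsum])
    rw [this]
    omega
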